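/- arXiv:2008.07390 — 2 statements merged into one kernel-verified Lean document; each statement's English description precedes it below -/
import Mathlib

section
/- Let γ : I → ℝ^{n+2} be a C² unit-speed curve with small acceleration in ℍ^{n+1}. Let t₀ ∈ I and let ξ ∈ ℝ^{n+2} be a nonzero vector with ⟨ξ,ξ⟩ = 0, ⟨γ(t₀), ξ⟩ = −1 and ⟨γ'(t₀), ξ⟩ = 0 (i.e. the horosphere H_ξ = {x ∈ ℍ^{n+1} : ⟨x,ξ⟩ = −1} is tangent to γ at γ(t₀)). Then ⟨γ(t), ξ⟩ < −1 for every t ∈ I with t ≠ t₀; that is, γ lies in the interior of the concave side of every tangent horosphere, except at the tangency point. -/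
/-- The Minkowski bilinear form on `ℝ^{n+2}`:
`⟨x,y⟩ = x₁y₁ + ⋯ + x_{n+1}y_{n+1} − x_{n+2}y_{n+2}`. -/
noncomputable def mink (n : ℕ) (x y : Fin (n + 2) → ℝ) : ℝ :=
  (∑ i : Fin (n + 1), x i.castSucc * y i.castSucc) -
    x (Fin.last (n + 1)) * y (Fin.last (n + 1))

lemma mink_comm (n : ℕ) (x y : Fin (n + 2) → ℝ) : mink n x y = mink n y x := by
  simp [mink, mul_comm]

lemma mink_add_left (n : ℕ) (x y z : Fin (n + 2) → ℝ) :
    mink n (x + y) z = mink n x z + mink n y z := by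
  simp [mink, add_mul, Finset.sum_add_distrib]; ring

lemma mink_smul_left (n : ℕ) (c : ℝ) (x z : Fin (n + 2) → ℝ) :
    mink n (c • x) z = c * mink n x z := by
  simp [mink, Finset.mul_sum, mul_sub, mul_assoc]

lemma mink_sub_left (n : ℕ) (x y z : Fin (n + 2) → ℝ) :
    mink n (x - y) z = mink n x z - mink n y z := by
  simp [mink, sub_mul, Finset.sum_sub_distrib]; ring

lemma mink_add_right (n : ℕ) (x y z : Fin (n + 2) → ℝ) :
    mink n z (x + y) = mink n z x + mink n z y := by
  rw [mink_comm, mink_add_left, mink_comm n x z, mink_comm n y z]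

lemma mink_smul_right (n : ℕ) (c : ℝ) (x z : Fin (n + 2) → ℝ) :
    mink n z (c • x) = c * mink n z x := by
  rw [mink_comm, mink_smul_left, mink_comm]

lemma mink_sub_right (n : ℕ) (x y z : Fin (n + 2) → ℝ) :
    mink n z (x - y) = mink n z x - mink n z y := by
  rw [mink_comm, mink_sub_left, mink_comm n x z, mink_comm n y z]

lemma mink_zero_right (n : ℕ) (x : Fin (n + 2) → ℝ) : mink n x 0 = 0 := by
  simp [mink]

lemma mink_expand_aux (n : ℕ) (c d : ℝ) (a w : Fin (n + 2) → ℝ) :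
    mink n (c • a - d • w) (c • a - d • w)
      = c * c * mink n a a - c * d * mink n a w - c * d * mink n w a + d * d * mink n w w := by
  simp only [mink_sub_left, mink_sub_right, mink_smul_left, mink_smul_right]; ring

/-- Cauchy–Schwarz / positivity: a vector Minkowski-orthogonal to a point of the
hyperboloid is spacelike. -/
lemma mink_orth_nonneg (n : ℕ) (v p : Fin (n + 2) → ℝ)
    (hp : mink n p p = -1) (hpl : 0 < p (Fin.last (n + 1)))
    (ho : mink n v p = 0) : 0 ≤ mink n v v := by
  set A := ∑ i : Fin (n + 1), v i.castSucc * v i.castSucc with hA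
  set B := ∑ i : Fin (n + 1), p i.castSucc * p i.castSucc with hB
  set C := ∑ i : Fin (n + 1), v i.castSucc * p i.castSucc with hC
  set vL := v (Fin.last (n + 1)); set pL := p (Fin.last (n + 1))
  have hCS : C ^ 2 ≤ A * B := by
    have := Finset.sum_mul_sq_le_sq_mul_sq Finset.univ
      (fun i : Fin (n + 1) => v i.castSucc) (fun i : Fin (n + 1) => p i.castSucc)
    simpa [hA, hB, hC, sq] using this
  have hA0 : 0 ≤ A := Finset.sum_nonneg fun i _ => mul_self_nonneg _
  have hp' : B - pL * pL = -1 := hp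
  have ho' : C - vL * pL = 0 := ho
  have hCeq : C = vL * pL := by linarith
  have hBeq : B = pL * pL - 1 := by linarith
  have h2 : (vL * pL) * (vL * pL) ≤ A * (pL * pL) - A := by
    have := hCS
    rw [hCeq, hBeq] at this
    nlinarith [this]
  show 0 ≤ A - vL * vL
  nlinarith [h2, hA0, mul_pos hpl hpl]

/-- Derivative of the Minkowski product of two curves. -/
lemma mink_hasDeriv {n : ℕ} {u v : ℝ → Fin (n + 2) → ℝ} {u' v' : Fin (n + 2) → ℝ}
    {I : Set ℝ} {t : ℝ} (hu : HasDerivWithinAt u u' I t) (hv : HasDerivWithinAt v v' I t) :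
    HasDerivWithinAt (fun s => mink n (u s) (v s))
      (mink n u' (v t) + mink n (u t) v') I t := by
  have hui := hasDerivWithinAt_pi.mp hu
  have hvi := hasDerivWithinAt_pi.mp hv
  have h1 : HasDerivWithinAt
      (fun s => (∑ i : Fin (n + 1), u s i.castSucc * v s i.castSucc) -
        u s (Fin.last (n + 1)) * v s (Fin.last (n + 1)))
      ((∑ i : Fin (n + 1), (u' i.castSucc * v t i.castSucc + u t i.castSucc * v' i.castSucc)) -
        (u' (Fin.last (n + 1)) * v t (Fin.last (n + 1)) +
          u t (Fin.last (n + 1)) * v' (Fin.last (n + 1)))) I t :=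
    (HasDerivWithinAt.fun_sum fun i _ => (hui i.castSucc).mul (hvi i.castSucc)).sub
      ((hui _).mul (hvi _))
  convert h1 using 1
  · rfl
  simp [mink, Finset.sum_add_distrib]; ring

/-- Second-order comparison lemma: if `f t₀ = -1`, `f' t₀ = 0`, and `f'' < 0` wherever
`f < 0` (at interior points), then `f < -1` strictly to the right of `t₀`. -/
lemma aux_right (I : Set ℝ) (hI : I.OrdConnected) (f f' f'' : ℝ → ℝ)
    (hd1 : ∀ t ∈ I, HasDerivWithinAt f (f' t) I t)
    (hd2 : ∀ t ∈ I, HasDerivWithinAt f' (f'' t) I t)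
    (hkey : ∀ t ∈ interior I, f t < 0 → f'' t < 0)
    (t₀ : ℝ) (ht₀ : t₀ ∈ I) (h0 : f t₀ = -1) (h0' : f' t₀ = 0)
    (t : ℝ) (ht : t ∈ I) (hlt : t₀ < t) : f t < -1 := by
  have hIcc : Set.Icc t₀ t ⊆ I := hI.out ht₀ ht
  have hcf : ContinuousOn f I := fun s hs => (hd1 s hs).continuousWithinAt
  have hcf' : ContinuousOn f' I := fun s hs => (hd2 s hs).continuousWithinAt
  set S : Set ℝ := {s | s ∈ Set.Icc t₀ t ∧ ∀ r ∈ Set.Icc t₀ s, f r ≤ -(1/2)} with hSdef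
  have ht₀S : t₀ ∈ S := by
    refine ⟨⟨le_refl _, hlt.le⟩, fun r hr => ?_⟩
    have : r = t₀ := le_antisymm hr.2 hr.1
    rw [this, h0]; norm_num
  have hne : S.Nonempty := ⟨t₀, ht₀S⟩
  have hbdd : BddAbove S := ⟨t, fun s hs => hs.1.2⟩
  set b := sSup S with hb
  have hbt : b ≤ t := csSup_le hne fun s hs => hs.1.2
  have ht₀b : t₀ ≤ b := le_csSup hbdd ht₀S
  have hbI : b ∈ I := hIcc ⟨ht₀b, hbt⟩
  -- f ≤ -1/2 on [t₀, b]
  have hhalf : ∀ r ∈ Set.Icc t₀ b, f r ≤ -(1/2) := by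
    intro r hr
    rcases eq_or_lt_of_le hr.2 with heq | hlt'
    · by_contra hcon
      push_neg at hcon
      have hrI : r ∈ I := hIcc ⟨hr.1, heq ▸ hbt⟩
      have hev : {x | -(1/2) < f x} ∈ nhdsWithin r I :=
        (hcf r hrI).eventually (eventually_gt_nhds hcon)
      obtain ⟨ε, hε, hball⟩ := Metric.mem_nhdsWithin_iff.mp hev
      have hlt2 : r - ε < sSup S := by rw [← hb, ← heq]; linarith
      obtain ⟨s, hsS, hrs⟩ := exists_lt_of_lt_csSup hne hlt2
      have hsb : s ≤ b := le_csSup hbdd hsS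
      have hsr : s ≤ r := heq ▸ hsb
      have hsball : s ∈ Metric.ball r ε := by
        simp only [Metric.mem_ball, Real.dist_eq, abs_lt]
        constructor <;> linarith
      have h3 : -(1/2) < f s := hball ⟨hsball, hIcc ⟨hsS.1.1, hsS.1.2⟩⟩
      exact absurd (hsS.2 s ⟨hsS.1.1, le_refl _⟩) (not_le.mpr h3)
    · obtain ⟨s, hsS, hrs⟩ := exists_lt_of_lt_csSup hne hlt'
      exact hsS.2 r ⟨hr.1, hrs.le⟩
  have hsubb : Set.Icc t₀ b ⊆ I := fun x hx => hIcc ⟨hx.1, hx.2.trans hbt⟩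
  -- derivative facts on interior
  have hderiv2 : ∀ x ∈ Set.Ioo t₀ b, deriv f' x = f'' x ∧ f'' x < 0 := by
    intro x hx
    have hxint : x ∈ interior I :=
      interior_maximal (Set.Ioo_subset_Icc_self.trans hsubb) isOpen_Ioo hx
    have hxnb : I ∈ nhds x := mem_interior_iff_mem_nhds.mp hxint
    have hda : HasDerivAt f' (f'' x) x := (hd2 x (interior_subset hxint)).hasDerivAt hxnb
    refine ⟨hda.deriv, hkey x hxint ?_⟩
    have := hhalf x ⟨hx.1.le, hx.2.le⟩
    linarith
  have hSA : StrictAntiOn f' (Set.Icc t₀ b) := by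
    refine strictAntiOn_of_deriv_neg (convex_Icc _ _) (hcf'.mono hsubb) fun x hx => ?_
    rw [interior_Icc] at hx
    rw [(hderiv2 x hx).1]; exact (hderiv2 x hx).2
  have hf'le : ∀ s ∈ Set.Icc t₀ b, f' s ≤ 0 := by
    intro s hs
    rcases eq_or_lt_of_le hs.1 with heq | hlt'
    · rw [← heq, h0']
    · have := hSA ⟨le_refl _, ht₀b⟩ hs hlt'
      rw [h0'] at this; exact this.le
  have hAnti : AntitoneOn f (Set.Icc t₀ b) := by
    refine antitoneOn_of_deriv_nonpos (convex_Icc _ _) (hcf.mono hsubb) ?_ ?_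
    · intro x hx
      rw [interior_Icc] at hx
      have hxint : x ∈ interior I :=
        interior_maximal (Set.Ioo_subset_Icc_self.trans hsubb) isOpen_Ioo hx
      exact ((hd1 x (interior_subset hxint)).hasDerivAt
        (mem_interior_iff_mem_nhds.mp hxint)).differentiableAt.differentiableWithinAt
    · intro x hx
      rw [interior_Icc] at hx
      have hxint : x ∈ interior I :=
        interior_maximal (Set.Ioo_subset_Icc_self.trans hsubb) isOpen_Ioo hx
      have hda : HasDerivAt f (f' x) x :=
        (hd1 x (interior_subset hxint)).hasDerivAt (mem_interior_iff_mem_nhds.mp hxint)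
      rw [hda.deriv]
      exact hf'le x ⟨hx.1.le, hx.2.le⟩
  have hfone : ∀ s ∈ Set.Icc t₀ b, f s ≤ -1 := by
    intro s hs
    have := hAnti ⟨le_refl _, ht₀b⟩ hs hs.1
    rw [h0] at this; exact this
  -- b = t
  have hbeq : b = t := by
    by_contra hne'
    have hblt : b < t := lt_of_le_of_ne hbt hne'
    have hfb : f b ≤ -1 := hfone b ⟨ht₀b, le_refl _⟩
    have hev : {x | f x < -(1/2)} ∈ nhdsWithin b I :=
      (hcf b hbI).eventually (eventually_lt_nhds (by linarith : f b < -(1/2)))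
    obtain ⟨ε, hε, hball⟩ := Metric.mem_nhdsWithin_iff.mp hev
    set s' := min t (b + ε / 2) with hs'
    have hbs' : b < s' := lt_min hblt (by linarith)
    have hs't : s' ≤ t := min_le_left _ _
    have hs'S : s' ∈ S := by
      refine ⟨⟨ht₀b.trans hbs'.le, hs't⟩, fun r hr => ?_⟩
      rcases le_or_gt r b with hrb | hrb
      · exact hhalf r ⟨hr.1, hrb⟩
      · have hrI : r ∈ I := hIcc ⟨hr.1, hr.2.trans hs't⟩
        have hrball : r ∈ Metric.ball b ε := by
          simp only [Metric.mem_ball, Real.dist_eq, abs_lt]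
          have : r ≤ b + ε / 2 := hr.2.trans (min_le_right _ _)
          constructor <;> linarith
        exact (hball ⟨hrball, hrI⟩).le
    exact absurd (le_csSup hbdd hs'S) (not_le.mpr hbs')
  -- strict decrease on [t₀, t]
  have hSAf : StrictAntiOn f (Set.Icc t₀ t) := by
    refine strictAntiOn_of_deriv_neg (convex_Icc _ _) (hcf.mono hIcc) fun x hx => ?_
    rw [interior_Icc] at hx
    have hxb : x ∈ Set.Icc t₀ b := by rw [hbeq]; exact ⟨hx.1.le, hx.2.le⟩
    have hxint : x ∈ interior I :=
      interior_maximal (fun y hy => hIcc ⟨hy.1.le, hy.2.le⟩ : Set.Ioo t₀ t ⊆ I) isOpen_Ioo hx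
    have hda : HasDerivAt f (f' x) x :=
      (hd1 x (interior_subset hxint)).hasDerivAt (mem_interior_iff_mem_nhds.mp hxint)
    rw [hda.deriv]
    have := hSA ⟨le_refl _, ht₀b⟩ hxb hx.1
    rw [h0'] at this; exact this
  have := hSAf ⟨le_refl _, hlt.le⟩ ⟨hlt.le, le_refl _⟩ hlt
  rw [h0] at this; exact this

/-- A `C²` unit-speed curve with small acceleration in `ℍ^{n+1}` lies in the interior of
the concave side of every tangent horosphere, except at the tangency point. -/
theorem small_acceleration_concave_side_horosphere
    (n : ℕ) (I : Set ℝ) (hI : I.OrdConnected)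
    (γ γ' γ'' : ℝ → Fin (n + 2) → ℝ)
    (hd1 : ∀ t ∈ I, HasDerivWithinAt γ (γ' t) I t)
    (hd2 : ∀ t ∈ I, HasDerivWithinAt γ' (γ'' t) I t)
    (hcont : ContinuousOn γ'' I)
    (hhyp : ∀ t ∈ I, mink n (γ t) (γ t) = -1)
    (hpos : ∀ t ∈ I, 0 < γ t (Fin.last (n + 1)))
    (hspeed : ∀ t ∈ I, mink n (γ' t) (γ' t) = 1)
    (hacc : ∀ t ∈ I, mink n (γ'' t - γ t) (γ'' t - γ t) < 1)
    (t₀ : ℝ) (ht₀ : t₀ ∈ I)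
    (ξ : Fin (n + 2) → ℝ) (hξ : ξ ≠ 0) (hnull : mink n ξ ξ = 0)
    (htan : mink n (γ t₀) ξ = -1) (horth : mink n (γ' t₀) ξ = 0) :
    ∀ t ∈ I, t ≠ t₀ → mink n (γ t) ξ < -1 := by
  -- the scalar functions
  set f : ℝ → ℝ := fun t => mink n (γ t) ξ with hf
  set f' : ℝ → ℝ := fun t => mink n (γ' t) ξ with hf'
  set f'' : ℝ → ℝ := fun t => mink n (γ'' t) ξ with hf''
  have hD1 : ∀ t ∈ I, HasDerivWithinAt f (f' t) I t := by
    intro t htI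
    have := mink_hasDeriv (n := n) (hd1 t htI) (hasDerivWithinAt_const t I ξ)
    simpa [mink_zero_right] using this
  have hD2 : ∀ t ∈ I, HasDerivWithinAt f' (f'' t) I t := by
    intro t htI
    have := mink_hasDeriv (n := n) (hd2 t htI) (hasDerivWithinAt_const t I ξ)
    simpa [mink_zero_right] using this
  -- first variation of ⟨γ,γ⟩ : ⟨γ', γ⟩ = 0 on interior I
  have horthγ : ∀ s ∈ interior I, mink n (γ' s) (γ s) = 0 := by
    intro s hs
    have hsI : s ∈ I := interior_subset hs
    have hnb : I ∈ nhds s := mem_interior_iff_mem_nhds.mp hs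
    have hda : HasDerivAt (fun t => mink n (γ t) (γ t))
        (mink n (γ' s) (γ s) + mink n (γ s) (γ' s)) s :=
      (mink_hasDeriv (hd1 s hsI) (hd1 s hsI)).hasDerivAt hnb
    have hconst : HasDerivAt (fun t => mink n (γ t) (γ t)) 0 s := by
      refine (hasDerivAt_const s (-1 : ℝ)).congr_of_eventuallyEq ?_
      filter_upwards [hnb] with x hx using hhyp x hx
    have := hda.unique hconst
    rw [mink_comm n (γ s) (γ' s)] at this
    linarith
  -- second variation : ⟨γ'', γ⟩ = -1 on interior I
  have hsecond : ∀ s ∈ interior I, mink n (γ'' s) (γ s) = -1 := by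
    intro s hs
    have hsI : s ∈ I := interior_subset hs
    have hnb : I ∈ nhds s := mem_interior_iff_mem_nhds.mp hs
    have hda : HasDerivAt (fun t => mink n (γ' t) (γ t))
        (mink n (γ'' s) (γ s) + mink n (γ' s) (γ' s)) s :=
      (mink_hasDeriv (hd2 s hsI) (hd1 s hsI)).hasDerivAt hnb
    have hconst : HasDerivAt (fun t => mink n (γ' t) (γ t)) 0 s := by
      refine (hasDerivAt_const s (0 : ℝ)).congr_of_eventuallyEq ?_
      filter_upwards [isOpen_interior.mem_nhds hs] with x hx using horthγ x hx
    have := hda.unique hconst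
    rw [hspeed s hsI] at this
    linarith
  -- the key differential inequality
  have hkey : ∀ s ∈ interior I, f s < 0 → f'' s < 0 := by
    intro s hs hfs
    have hsI : s ∈ I := interior_subset hs
    have hfs' : mink n (γ s) ξ < 0 := hfs
    have hpp : mink n (γ s) (γ s) = -1 := hhyp s hsI
    have hap : mink n (γ'' s - γ s) (γ s) = 0 := by
      rw [mink_sub_left, hsecond s hs, hpp]; ring
    have haa1 : mink n (γ'' s - γ s) (γ'' s - γ s) < 1 := hacc s hsI
    have haa0 : 0 ≤ mink n (γ'' s - γ s) (γ'' s - γ s) :=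
      mink_orth_nonneg n _ (γ s) hpp (hpos s hsI) hap
    have hξp : mink n ξ (γ s) = mink n (γ s) ξ := mink_comm n ξ (γ s)
    have hwp : mink n (ξ + mink n (γ s) ξ • γ s) (γ s) = 0 := by
      rw [mink_add_left, mink_smul_left, hpp, hξp]; ring
    have hww : mink n (ξ + mink n (γ s) ξ • γ s) (ξ + mink n (γ s) ξ • γ s)
        = mink n (γ s) ξ * mink n (γ s) ξ := by
      simp only [mink_add_left, mink_add_right, mink_smul_left, mink_smul_right]
      rw [hnull, hξp, hpp]; ring
    have haw : mink n (γ'' s - γ s) (ξ + mink n (γ s) ξ • γ s)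
        = mink n (γ'' s - γ s) ξ := by
      rw [mink_add_right, mink_smul_right, hap]; ring
    have hwa : mink n (ξ + mink n (γ s) ξ • γ s) (γ'' s - γ s)
        = mink n (γ'' s - γ s) ξ :=
      (mink_comm n _ _).trans haw
    set F := mink n (γ s) ξ with hF
    set G := mink n (γ'' s - γ s) ξ with hG
    have hup : mink n ((F * F) • (γ'' s - γ s) - G • (ξ + F • γ s)) (γ s) = 0 := by
      rw [mink_sub_left, mink_smul_left, mink_smul_left, hap, hwp]; ring
    have huu0 : 0 ≤ mink n ((F * F) • (γ'' s - γ s) - G • (ξ + F • γ s))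
        ((F * F) • (γ'' s - γ s) - G • (ξ + F • γ s)) :=
      mink_orth_nonneg n _ (γ s) hpp (hpos s hsI) hup
    have hexp : mink n ((F * F) • (γ'' s - γ s) - G • (ξ + F • γ s))
        ((F * F) • (γ'' s - γ s) - G • (ξ + F • γ s))
        = (F * F) * ((F * F) * mink n (γ'' s - γ s) (γ'' s - γ s) - G * G) := by
      rw [mink_expand_aux, haw, hwa, hww]; ring
    rw [hexp] at huu0
    have hfs2 : 0 < F * F := mul_pos_of_neg_of_neg hfs' hfs'
    have hgg : G * G ≤ (F * F) * mink n (γ'' s - γ s) (γ'' s - γ s) := by nlinarith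
    have hG2 : G * G < F * F := by nlinarith
    have hf''eq : f'' s = F + G := by
      show mink n (γ'' s) ξ = F + G
      have h5 : mink n (γ'' s - γ s) ξ = mink n (γ'' s) ξ - mink n (γ s) ξ :=
        mink_sub_left n _ _ _
      rw [← hF, ← hG] at h5
      linarith
    rw [hf''eq]
    nlinarith [hG2, hfs', mul_pos_of_neg_of_neg hfs' hfs']
  intro t htI htne
  rcases lt_or_gt_of_ne htne with hlt | hgt
  · -- t < t₀ : reflect
    set I' : Set ℝ := Neg.neg ⁻¹' I with hI'
    have hI'o : I'.OrdConnected := by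
      constructor
      intro a ha b hb c hc
      have : -c ∈ Set.Icc (-b) (-a) := ⟨neg_le_neg hc.2, neg_le_neg hc.1⟩
      exact hI.out hb ha this
    have hmem : ∀ s : ℝ, s ∈ I' ↔ -s ∈ I := fun s => Iff.rfl
    have hnegd : ∀ s : ℝ, HasDerivWithinAt (Neg.neg : ℝ → ℝ) (-1) I' s :=
      fun s => (hasDerivAt_neg s).hasDerivWithinAt
    have hmaps : Set.MapsTo (Neg.neg : ℝ → ℝ) I' I := fun x hx => hx
    have hD1' : ∀ s ∈ I', HasDerivWithinAt (fun s => f (-s)) (-f' (-s)) I' s := by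
      intro s hs
      have := HasDerivWithinAt.comp s (hD1 (-s) hs) (hnegd s) hmaps
      simpa [Function.comp_def] using this
    have hD2' : ∀ s ∈ I', HasDerivWithinAt (fun s => -f' (-s)) (f'' (-s)) I' s := by
      intro s hs
      have := HasDerivWithinAt.comp s ((hD2 (-s) hs).neg) (hnegd s) hmaps
      simpa [Function.comp_def] using this
    have hint : ∀ s : ℝ, s ∈ interior I' → -s ∈ interior I := by
      intro s hs
      have : interior I' = (Homeomorph.neg ℝ) ⁻¹' (interior I) := by
        rw [(Homeomorph.neg ℝ).preimage_interior]
        rfl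
      rw [this] at hs
      exact hs
    have hkey' : ∀ s ∈ interior I', (fun s => f (-s)) s < 0 → (fun s => f'' (-s)) s < 0 :=
      fun s hs h => hkey (-s) (hint s hs) h
    have ht₀' : -t₀ ∈ I' := by rw [Set.mem_preimage, neg_neg]; exact ht₀
    have ht' : -t ∈ I' := by rw [Set.mem_preimage, neg_neg]; exact htI
    have h0 : (fun s => f (-s)) (-t₀) = -1 := by simp only [neg_neg]; exact htan
    have h0' : (fun s => -f' (-s)) (-t₀) = 0 := by
      simp only [neg_neg]
      have : f' t₀ = 0 := horth
      rw [this, neg_zero]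
    have hres := aux_right I' hI'o (fun s => f (-s)) (fun s => -f' (-s)) (fun s => f'' (-s))
      hD1' hD2' hkey' (-t₀) ht₀' h0 h0' (-t) ht' (by linarith)
    simp only [neg_neg] at hres
    exact hres
  · exact aux_right I hI f f' f'' hD1 hD2 hkey t₀ ht₀ htan horth t htI hgt
end

section
/- Let M be a smooth manifold and σ, ν : M → ℝ^{n+2} smooth maps with ⟨σ(p),σ(p)⟩ = −1, σ(p)_{n+2} > 0, ⟨ν(p),ν(p)⟩ = 1 and ⟨σ(p),ν(p)⟩ = 0 for all p ∈ M. If at a point p ∈ M the quadratic form v ↦ ⟨d_pσ(v), d_pσ(v)⟩ − ⟨d_pν(v), d_pν(v)⟩ on T_pM is positive definite, then d_pσ is injective. -/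
open scoped Manifold

lemma mink_zero_left (n : ℕ) (y : Fin (n + 2) → ℝ) : mink n 0 y = 0 := by
  simp [mink]

lemma mink_isBoundedBilinearMap (n : ℕ) :
    IsBoundedBilinearMap ℝ
      (fun q : (Fin (n + 2) → ℝ) × (Fin (n + 2) → ℝ) => mink n q.1 q.2) := by
  constructor
  · intro x₁ x₂ y
    simp only [mink, Pi.add_apply]
    rw [Finset.sum_congr rfl
      (fun i _ => add_mul (x₁ i.castSucc) (x₂ i.castSucc) (y i.castSucc)),
      Finset.sum_add_distrib]
    ring
  · intro c x y
    simp only [mink, Pi.smul_apply, smul_eq_mul]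
    rw [Finset.sum_congr rfl
      (fun i _ => mul_assoc c (x i.castSucc) (y i.castSucc)), ← Finset.mul_sum]
    ring
  · intro x y₁ y₂
    simp only [mink, Pi.add_apply]
    rw [Finset.sum_congr rfl
      (fun i _ => mul_add (x i.castSucc) (y₁ i.castSucc) (y₂ i.castSucc)),
      Finset.sum_add_distrib]
    ring
  · intro c x y
    simp only [mink, Pi.smul_apply, smul_eq_mul]
    rw [Finset.sum_congr rfl
      (fun i _ => mul_left_comm (x i.castSucc) c (y i.castSucc)), ← Finset.mul_sum]
    ring
  · refine ⟨(n + 2 : ℝ), by positivity, fun x y => ?_⟩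
    have h : ∀ i j : Fin (n + 2), ‖x i * y j‖ ≤ ‖x‖ * ‖y‖ := by
      intro i j
      rw [norm_mul]
      exact mul_le_mul (norm_le_pi_norm x i) (norm_le_pi_norm y j) (norm_nonneg _)
        (norm_nonneg _)
    calc ‖mink n x y‖
        ≤ ‖∑ i : Fin (n + 1), x i.castSucc * y i.castSucc‖ +
            ‖x (Fin.last (n + 1)) * y (Fin.last (n + 1))‖ := norm_sub_le _ _
      _ ≤ (∑ _i : Fin (n + 1), ‖x‖ * ‖y‖) + ‖x‖ * ‖y‖ := by
          refine add_le_add ((norm_sum_le _ _).trans ?_) (h _ _)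
          exact Finset.sum_le_sum fun i _ => h _ _
      _ ≤ ((n : ℝ) + 2) * ‖x‖ * ‖y‖ := by
          rw [Finset.sum_const, Finset.card_univ, Fintype.card_fin, nsmul_eq_mul]
          push_cast
          nlinarith [norm_nonneg x, norm_nonneg y, mul_nonneg (norm_nonneg x) (norm_nonneg y)]

lemma mink_nonneg_of_orthogonal {n : ℕ} (s w : Fin (n + 2) → ℝ)
    (hs : mink n s s = -1) (ho : mink n s w = 0) : 0 ≤ mink n w w := by
  simp only [mink] at hs ho ⊢
  set t := s (Fin.last (n + 1))
  set u := w (Fin.last (n + 1))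
  set A := ∑ i : Fin (n + 1), s i.castSucc * s i.castSucc with hA
  set B := ∑ i : Fin (n + 1), w i.castSucc * w i.castSucc with hB
  set C := ∑ i : Fin (n + 1), s i.castSucc * w i.castSucc with hC
  have hAnn : 0 ≤ A := Finset.sum_nonneg fun i _ => mul_self_nonneg _
  have hBnn : 0 ≤ B := Finset.sum_nonneg fun i _ => mul_self_nonneg _
  have hcs : C ^ 2 ≤ A * B := by
    have := Finset.sum_mul_sq_le_sq_mul_sq Finset.univ
      (fun i : Fin (n + 1) => s i.castSucc) (fun i : Fin (n + 1) => w i.castSucc)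
    simpa [hA, hB, hC, pow_two] using this
  have ho' : C = t * u := by linarith
  have hA' : A = t * t - 1 := by linarith
  have ht : 1 ≤ t * t := by linarith
  have hC2 : C ^ 2 = t * t * (u * u) := by rw [ho']; ring
  have hAB : A * B = t * t * B - B := by rw [hA']; ring
  have hid : t * t * (B - u * u) = t * t * B - C ^ 2 := by rw [hC2]; ring
  have key : B ≤ t * t * (B - u * u) := by linarith
  nlinarith [key, hBnn, ht]

/-- If `(σ,ν)` is a smooth map to `T¹ℍ^{n+1}` and at a point `p` the quadratic form
`v ↦ ⟨dσ(v),dσ(v)⟩ − ⟨dν(v),dν(v)⟩` (the pullback of the para-Sasaki metric by the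
lift) is positive definite, then `dσ` is injective at `p`. -/
theorem riemannian_pullback_implies_immersion
    {n : ℕ} {M : Type*} [TopologicalSpace M]
    [ChartedSpace (EuclideanSpace ℝ (Fin n)) M]
    [IsManifold (𝓡 n) (⊤ : ℕ∞) M]
    (σ ν : M → Fin (n + 2) → ℝ)
    (hσ : ContMDiff (𝓡 n) 𝓘(ℝ, Fin (n + 2) → ℝ) (⊤ : ℕ∞) σ)
    (hν : ContMDiff (𝓡 n) 𝓘(ℝ, Fin (n + 2) → ℝ) (⊤ : ℕ∞) ν)
    (hσσ : ∀ p, mink n (σ p) (σ p) = -1)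
    (hpos : ∀ p, 0 < σ p (Fin.last (n + 1)))
    (hνν : ∀ p, mink n (ν p) (ν p) = 1)
    (hσν : ∀ p, mink n (σ p) (ν p) = 0)
    (p : M)
    (hdef : ∀ v : EuclideanSpace ℝ (Fin n), v ≠ 0 →
      0 < mink n (mfderiv (𝓡 n) 𝓘(ℝ, Fin (n + 2) → ℝ) σ p v)
            (mfderiv (𝓡 n) 𝓘(ℝ, Fin (n + 2) → ℝ) σ p v) -
          mink n (mfderiv (𝓡 n) 𝓘(ℝ, Fin (n + 2) → ℝ) ν p v)
            (mfderiv (𝓡 n) 𝓘(ℝ, Fin (n + 2) → ℝ) ν p v)) :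
    Function.Injective (mfderiv (𝓡 n) 𝓘(ℝ, Fin (n + 2) → ℝ) σ p) := by
  classical
  set Dσ := mfderiv (𝓡 n) 𝓘(ℝ, Fin (n + 2) → ℝ) σ p with hDσdef
  set Dν := mfderiv (𝓡 n) 𝓘(ℝ, Fin (n + 2) → ℝ) ν p with hDνdef
  have hσd : MDifferentiableAt (𝓡 n) 𝓘(ℝ, Fin (n + 2) → ℝ) σ p :=
    hσ.mdifferentiable (by simp) p
  have hνd : MDifferentiableAt (𝓡 n) 𝓘(ℝ, Fin (n + 2) → ℝ) ν p :=
    hν.mdifferentiable (by simp) p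
  have hF := mink_isBoundedBilinearMap n
  -- differentiate the constraint mink (σ p) (ν p) = 0
  have hζ : MDifferentiableAt (𝓡 n) 𝓘(ℝ, (Fin (n + 2) → ℝ) × (Fin (n + 2) → ℝ))
      (fun q => (σ q, ν q)) p := hσd.prodMk_space hνd
  have hFd : MDifferentiableAt 𝓘(ℝ, (Fin (n + 2) → ℝ) × (Fin (n + 2) → ℝ)) 𝓘(ℝ, ℝ)
      (fun q : (Fin (n + 2) → ℝ) × (Fin (n + 2) → ℝ) => mink n q.1 q.2)
      ((fun q => (σ q, ν q)) p) :=
    (hF.differentiableAt _).mdifferentiableAt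
  have hcomp := mfderiv_comp p hFd hζ
  have hconst : ((fun q : (Fin (n + 2) → ℝ) × (Fin (n + 2) → ℝ) => mink n q.1 q.2) ∘
      (fun q => (σ q, ν q))) = fun _ : M => (0 : ℝ) := by
    funext q
    simp only [Function.comp_apply]
    exact hσν q
  have hzero : mfderiv (𝓡 n) 𝓘(ℝ, ℝ)
      ((fun q : (Fin (n + 2) → ℝ) × (Fin (n + 2) → ℝ) => mink n q.1 q.2) ∘
        (fun q => (σ q, ν q))) p = 0 := by
    rw [hconst]
    exact mfderiv_const
  have hmf : mfderiv 𝓘(ℝ, (Fin (n + 2) → ℝ) × (Fin (n + 2) → ℝ)) 𝓘(ℝ, ℝ)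
      (fun q : (Fin (n + 2) → ℝ) × (Fin (n + 2) → ℝ) => mink n q.1 q.2)
      (σ p, ν p) = hF.deriv (σ p, ν p) := by
    rw [mfderiv_eq_fderiv]
    exact hF.fderiv (σ p, ν p)
  have hprod : mfderiv (𝓡 n) 𝓘(ℝ, (Fin (n + 2) → ℝ) × (Fin (n + 2) → ℝ))
      (fun q => (σ q, ν q)) p = Dσ.prod Dν := by
    rw [modelWithCornersSelf_prod, ← chartedSpaceSelf_prod]
    exact hσd.mfderiv_prod hνd
  have hEq : (hF.deriv (σ p, ν p)).comp (Dσ.prod Dν) = 0 := by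
    have h := hcomp.symm.trans hzero
    rw [hmf, hprod] at h
    exact h
  have key : ∀ v : EuclideanSpace ℝ (Fin n),
      mink n (σ p) (Dν v) + mink n (Dσ v) (ν p) = 0 := by
    intro v
    have h := congrArg (fun L : EuclideanSpace ℝ (Fin n) →L[ℝ] ℝ => L v) hEq
    have h' : hF.deriv (σ p, ν p) (Dσ v, Dν v) = 0 := h
    rw [IsBoundedBilinearMap.deriv_apply] at h'
    exact h'
  -- injectivity
  rw [injective_iff_map_eq_zero]
  intro v hv
  by_contra hv0
  have h1 := hdef v hv0
  have hz1 : mink n (Dσ v) (Dσ v) = 0 := by rw [hv]; exact mink_zero_left n _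
  have hz2 : mink n (Dσ v) (ν p) = 0 := by rw [hv]; exact mink_zero_left n _
  rw [hz1] at h1
  have h2 := key v
  rw [hz2, add_zero] at h2
  have h3 := mink_nonneg_of_orthogonal (σ p) (Dν v) (hσσ p) h2
  linarith
end
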